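/- arXiv:2503.24186 — 3 statements merged into one kernel-verified Lean document; each statement's English description precedes it below -/
import Mathlib

section
/- Let R be a commutative Noetherian ring, M a finitely generated R-module, S a multiplicatively closed subset of R, and n ≥ 1. Then S^{-1}(ca_R^n(M)) = ca_{S^{-1}R}^n(S^{-1}M). -/
open CategoryTheory

noncomputable section

universe u

variable (R : Type u) [CommRing R]

/-- The `n`-th Ext group of two `R`-modules, as an `R`-module. -/
abbrev ExtM (n : ℕ) (M N : ModuleCat.{u} R) : ModuleCat.{u} R :=
  ((Ext R (ModuleCat.{u} R) n).obj (Opposite.op M)).obj N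

/-- The `n`-th cohomological annihilator of a module `M`:
elements `r` with `r • Ext^i(M, N) = 0` for all `i ≥ n` and all finitely generated `N`. -/
def caN (n : ℕ) (M : ModuleCat.{u} R) : Ideal R where
  carrier := {r | ∀ i, n ≤ i → ∀ N : ModuleCat.{u} R, Module.Finite R N →
    ∀ x : ExtM R i M N, r • x = 0}
  zero_mem' := by intro i _ N _ x; simp
  add_mem' := by
    intro a b ha hb i hi N hN x
    rw [add_smul, ha i hi N hN x, hb i hi N hN x, add_zero]
  smul_mem' := by
    intro c r hr i hi N hN x
    simp only [smul_eq_mul, mul_smul, hr i hi N hN x, smul_zero]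

/-- The cohomological annihilator `ca_R(M) = ⋃ₙ ca_R^n(M)`. -/
def ca (M : ModuleCat.{u} R) : Set R := ⋃ n : ℕ, (caN R n M : Set R)

/-- The `n`-th co-cohomological annihilator of a module `M`. -/
def cocaN (n : ℕ) (M : ModuleCat.{u} R) : Ideal R where
  carrier := {r | ∀ i, n ≤ i → ∀ N : ModuleCat.{u} R, Module.Finite R N →
    ∀ x : ExtM R i N M, r • x = 0}
  zero_mem' := by intro i _ N _ x; simp
  add_mem' := by
    intro a b ha hb i hi N hN x
    rw [add_smul, ha i hi N hN x, hb i hi N hN x, add_zero]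
  smul_mem' := by
    intro c r hr i hi N hN x
    simp only [smul_eq_mul, mul_smul, hr i hi N hN x, smul_zero]

/-- The co-cohomological annihilator `coca_R(M) = ⋃ₙ coca_R^n(M)`. -/
def coca (M : ModuleCat.{u} R) : Set R := ⋃ n : ℕ, (cocaN R n M : Set R)

/-- `M` has projective dimension at most `n`: `Ext^i(M, -) = 0` for all `i > n`. -/
def projDimLE (n : ℕ) (M : ModuleCat.{u} R) : Prop :=
  ∀ i : ℕ, n < i → ∀ N : ModuleCat.{u} R, Subsingleton (ExtM R i M N)

/-- `M` has injective dimension at most `n`: `Ext^i(-, M) = 0` for all `i > n`. -/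
def injDimLE (n : ℕ) (M : ModuleCat.{u} R) : Prop :=
  ∀ i : ℕ, n < i → ∀ N : ModuleCat.{u} R, Subsingleton (ExtM R i N M)

/-- `K` is an `n`-th syzygy of `M` with respect to resolutions by
finitely generated projective modules. -/
def IsSyz : ℕ → ModuleCat.{u} R → ModuleCat.{u} R → Prop
  | 0, M, K => Nonempty (K ≃ₗ[R] M)
  | n + 1, M, K => ∃ (L P : ModuleCat.{u} R), IsSyz n M L ∧
      Module.Finite R P ∧ Module.Projective R P ∧
      ∃ f : P →ₗ[R] L, Function.Surjective f ∧ Nonempty (K ≃ₗ[R] LinearMap.ker f)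

/-- `X` is a direct summand of `Y`. -/
def IsSummand (X Y : ModuleCat.{u} R) : Prop :=
  ∃ (i : X →ₗ[R] Y) (p : Y →ₗ[R] X), p.comp i = LinearMap.id

/-- `X` is a direct summand of a finite direct sum of copies of `G`. -/
def IsSummandOfCopies (G X : ModuleCat.{u} R) : Prop :=
  ∃ k : ℕ, IsSummand R X (ModuleCat.of R (Fin k → G))

/-- The subcategories `thickⁿ(G)` of `mod R`. -/
def thickN (G : ModuleCat.{u} R) : ℕ → Set (ModuleCat.{u} R)
  | 0 => {X | Subsingleton X}
  | n + 1 => {X | ∃ (Y Y₁ Y₂ : ModuleCat.{u} R) (f : Y₁ →ₗ[R] Y) (g : Y →ₗ[R] Y₂),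
      Function.Injective f ∧ Function.Surjective g ∧ LinearMap.ker g = LinearMap.range f ∧
      ((Y₁ ∈ thickN G n ∧ IsSummandOfCopies R G Y₂) ∨
        (IsSummandOfCopies R G Y₁ ∧ Y₂ ∈ thickN G n)) ∧
      IsSummand R X Y}

/-- The balls `|G|ₙ` of Dao–Takahashi. -/
def ballN (G : ModuleCat.{u} R) : ℕ → Set (ModuleCat.{u} R)
  | 0 => {X | Subsingleton X}
  | n + 1 => {Y | ∃ (Y' Y₁ Y₂ : ModuleCat.{u} R)
      (f : Y₁ →ₗ[R] (ModuleCat.of R (Y × Y'))) (g : (ModuleCat.of R (Y × Y')) →ₗ[R] Y₂),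
      Function.Injective f ∧ Function.Surjective g ∧ LinearMap.ker g = LinearMap.range f ∧
      Y₁ ∈ ballN G n ∧ IsSummandOfCopies R G Y₂}

/-- A regular local ring: a Noetherian local ring whose maximal ideal can be
generated by `dim R` elements. -/
def IsRegularLocal (A : Type u) [CommRing A] [IsLocalRing A] : Prop :=
  IsNoetherianRing A ∧ ∃ s : Finset A, Ideal.span (↑s : Set A) = IsLocalRing.maximalIdeal A ∧
    (s.card : WithBot ℕ∞) = ringKrullDim A

/-- The localization of a module at a prime, as a module category object over the local ring. -/
abbrev locMod (p : PrimeSpectrum R) (M : ModuleCat.{u} R) :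
    ModuleCat.{u} (Localization.AtPrime p.asIdeal) :=
  ModuleCat.of (Localization.AtPrime p.asIdeal) (LocalizedModule p.asIdeal.primeCompl M)

/-- Depth of a module over a local ring, via vanishing of `Ext` from the residue field. -/
def depthE (A : Type u) [CommRing A] [IsLocalRing A] (N : ModuleCat.{u} A) : ℕ∞ :=
  sInf ((fun n : ℕ => (n : ℕ∞)) ''
    {n : ℕ | ¬ Subsingleton (ExtM A n (ModuleCat.of A (IsLocalRing.ResidueField A)) N)})

/-- The large restricted flat dimension of `M`. -/
def rfdE (M : ModuleCat.{u} R) : ℕ∞ :=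
  ⨆ p : PrimeSpectrum R,
    (depthE (Localization.AtPrime p.asIdeal)
        (ModuleCat.of (Localization.AtPrime p.asIdeal) (Localization.AtPrime p.asIdeal)) -
      depthE (Localization.AtPrime p.asIdeal) (locMod R p M))

/-- `r • f` factors through a finitely generated projective module. -/
def FactorsThroughProj (M : ModuleCat.{u} R) (f : M →ₗ[R] M) : Prop :=
  ∃ P : ModuleCat.{u} R, Module.Projective R P ∧ Module.Finite R P ∧
    ∃ (g : M →ₗ[R] P) (h : P →ₗ[R] M), h.comp g = f

/-- The annihilator of the stable endomorphism ring of `M`. -/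
def annStableEnd (M : ModuleCat.{u} R) : Set R :=
  {r | ∀ f : M →ₗ[R] M, FactorsThroughProj R M (r • f)}

/-- A resolving subcategory of `mod R`. -/
def IsResolving (C : Set (ModuleCat.{u} R)) : Prop :=
  (∀ P : ModuleCat.{u} R, Module.Finite R P → Module.Projective R P → P ∈ C) ∧
  (∀ X Y : ModuleCat.{u} R, Y ∈ C → IsSummand R X Y → X ∈ C) ∧
  (∀ (Y Y₁ Y₂ : ModuleCat.{u} R) (f : Y₁ →ₗ[R] Y) (g : Y →ₗ[R] Y₂),
    Function.Injective f → Function.Surjective g → LinearMap.ker g = LinearMap.range f →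
    Y₁ ∈ C → Y₂ ∈ C → Y ∈ C) ∧
  (∀ X ∈ C, ∀ K : ModuleCat.{u} R, IsSyz R 1 X K → K ∈ C)

/-- The smallest resolving subcategory containing `G`. -/
def resCl (G : ModuleCat.{u} R) : Set (ModuleCat.{u} R) :=
  ⋂₀ {C | IsResolving R C ∧ G ∈ C}

end


noncomputable section AuxCA
set_option linter.unusedSectionVars false
set_option maxHeartbeats 1000000

namespace CAaux

namespace CAProof

variable {A : Type u} [CommRing A]

lemma killAll_of_iso {X Y : ModuleCat.{u} A} (e : X ≅ Y) (r : A) (h : ∀ x : X, r • x = 0) :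
    ∀ y : Y, r • y = 0 := by
  intro y
  have : y = e.hom (e.inv y) := (e.inv_hom_id_apply y).symm
  rw [this, ← map_smul, h, map_zero]

lemma kill_iff_of_iso {X Y : ModuleCat.{u} A} (e : X ≅ Y) (r : A) :
    (∀ x : X, r • x = 0) ↔ (∀ y : Y, r • y = 0) :=
  ⟨killAll_of_iso e r, killAll_of_iso e.symm r⟩

lemma sc_kill_iff (Sc : ShortComplex (ModuleCat.{u} A)) (r : A) :
    (∀ y : Sc.homology, r • y = 0) ↔
      ∀ ψ : Sc.X₂, Sc.g ψ = 0 → ∃ χ : Sc.X₁, Sc.f χ = r • ψ := by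
  rw [kill_iff_of_iso Sc.moduleCatHomologyIso r]
  constructor
  · intro h ψ hψ
    have := (Submodule.Quotient.mk_eq_zero _).mp
      (show Submodule.Quotient.mk (p := Sc.moduleCatToCycles.range) (r • ⟨ψ, hψ⟩) = 0 from
        h (Submodule.Quotient.mk ⟨ψ, hψ⟩))
    obtain ⟨χ, hχ⟩ := this
    exact ⟨χ, congrArg Subtype.val hχ⟩
  · intro h y
    obtain ⟨⟨ψ, hψ⟩, rfl⟩ := Submodule.Quotient.mk_surjective _ y
    show Submodule.Quotient.mk (p := Sc.moduleCatToCycles.range) (r • ⟨ψ, hψ⟩) = 0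
    rw [Submodule.Quotient.mk_eq_zero]
    obtain ⟨χ, hχ⟩ := h ψ hψ
    exact ⟨χ, Subtype.ext hχ⟩

lemma ext_kill_iff (W N : ModuleCat.{u} A) (P : ProjectiveResolution W) (j : ℕ) (r : A) :
    (∀ x : ExtM A (j+1) W N, r • x = 0) ↔
      ∀ ψ : P.complex.X (j+1) →ₗ[A] N, ψ ∘ₗ (P.complex.d (j+2) (j+1)).hom = 0 →
        ∃ χ : P.complex.X j →ₗ[A] N, χ ∘ₗ (P.complex.d (j+1) j).hom = r • ψ := by
  rw [kill_iff_of_iso (X := ExtM A (j+1) W N)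
    ((P.isoExt (j+1) N) ≪≫ ShortComplex.homologyMapIso
      ((P.complex.linearYonedaObj A N).isoSc' j (j+1) (j+2) (by simp) (by simp))) r]
  rw [sc_kill_iff]
  constructor
  · intro h ψ hψ
    obtain ⟨χ, hχ⟩ := h (ModuleCat.ofHom ψ) (ModuleCat.hom_ext hψ)
    exact ⟨χ.hom, congrArg ModuleCat.Hom.hom hχ⟩
  · intro h ψ hψ
    obtain ⟨χ, hχ⟩ := h ψ.hom (congrArg ModuleCat.Hom.hom hψ)
    exact ⟨ModuleCat.ofHom χ, ModuleCat.hom_ext hχ⟩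

end CAProof


section Char

variable {A : Type u} [CommRing A] {W : ModuleCat.{u} A} (P : ProjectiveResolution W)

/-- the `j+1`-st syzygy of `W` w.r.t. `P`, as a submodule of `X j`. -/
def Kn (j : ℕ) : Submodule A (P.complex.X j) :=
  LinearMap.range (P.complex.d (j+1) j).hom

/-- `r • id` on the syzygy extends to the ambient free module -/
def Efac (j : ℕ) (r : A) : Prop :=
  ∃ φ : P.complex.X j →ₗ[A] Kn P j, φ ∘ₗ (Kn P j).subtype = r • LinearMap.id

lemma Kn_eq_ker (n : ℕ) :
    Kn P (n+1) = LinearMap.ker (P.complex.d (n+1) n).hom :=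
  ((P.exact_succ n).moduleCat_range_eq_ker).symm ▸ rfl

lemma Efac_succ {j : ℕ} {r : A} (hp : Module.Projective A (P.complex.X j))
    (h : Efac P j r) : Efac P (j+1) r := by
  obtain ⟨φ, hφ⟩ := h
  set d : P.complex.X (j+1) →ₗ[A] P.complex.X j := (P.complex.d (j+1) j).hom with hd
  have hφ' : ∀ k : Kn P j, (φ (k : P.complex.X j) : P.complex.X j) = r • (k : P.complex.X j) := by
    intro k
    have := LinearMap.congr_fun hφ k
    simp only [LinearMap.comp_apply, Submodule.subtype_apply, LinearMap.smul_apply,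
      LinearMap.id_apply] at this
    rw [this]
    rfl
  obtain ⟨g, hg⟩ := Module.projective_lifting_property d.rangeRestrict φ
    (LinearMap.surjective_rangeRestrict d)
  have hg' : ∀ x, d (g x) = ((φ x : Kn P j) : P.complex.X j) := by
    intro x
    have := LinearMap.congr_fun hg x
    simp only [LinearMap.comp_apply] at this
    exact congrArg Subtype.val this
  set θ : P.complex.X (j+1) →ₗ[A] P.complex.X (j+1) := r • LinearMap.id - g ∘ₗ d with hθ
  have hranθ : ∀ x, θ x ∈ Kn P (j+1) := by
    intro x
    rw [Kn_eq_ker, LinearMap.mem_ker]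
    have : θ x = r • x - g (d x) := rfl
    rw [this, map_sub, map_smul, hg' (d x)]
    have : d x = ((⟨d x, LinearMap.mem_range_self d x⟩ : Kn P j) : P.complex.X j) := rfl
    conv_lhs => rw [this, hφ' ⟨d x, LinearMap.mem_range_self d x⟩]
    rw [sub_self]
  refine ⟨θ.codRestrict _ hranθ, ?_⟩
  ext y
  have hy : d (y : P.complex.X (j+1)) = 0 :=
    LinearMap.mem_ker.mp ((SetLike.ext_iff.mp (Kn_eq_ker P j) _).mp y.2)
  show θ (y : P.complex.X (j+1)) = r • (y : P.complex.X (j+1))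
  have : θ (y : P.complex.X (j+1)) = r • (y : P.complex.X (j+1)) - g (d y) := rfl
  rw [this, hy, map_zero, sub_zero]

lemma Efac_mono {j : ℕ} {r : A} (hp : ∀ i, Module.Projective A (P.complex.X i))
    (h : Efac P j r) : ∀ k, j ≤ k → Efac P k r := by
  intro k hk
  obtain ⟨m, rfl⟩ := Nat.exists_eq_add_of_le hk
  clear hk
  induction m with
  | zero => exact h
  | succ m ih => exact Efac_succ P (hp _) ih

lemma kill_of_Efac {j : ℕ} {r : A} (h : Efac P j r) (N : ModuleCat.{u} A) :
    ∀ x : ExtM A (j+1) W N, r • x = 0 := by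
  rw [CAProof.ext_kill_iff W N P j r]
  intro ψ hψ
  obtain ⟨φ, hφ⟩ := h
  set d : P.complex.X (j+1) →ₗ[A] P.complex.X j := (P.complex.d (j+1) j).hom with hd
  have hφ' : ∀ k : Kn P j, φ (k : P.complex.X j) = r • k := by
    intro k
    have := LinearMap.congr_fun hφ k
    simpa using this
  have hker : LinearMap.ker d ≤ LinearMap.ker ψ := by
    intro z hz
    rw [LinearMap.mem_ker] at hz ⊢
    have hz' : z ∈ Kn P (j+1) := by rw [Kn_eq_ker]; exact hz
    obtain ⟨w, hw⟩ := hz'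
    rw [← hw]
    exact LinearMap.congr_fun hψ w
  set ψ' : Kn P j →ₗ[A] N :=
    ((LinearMap.ker d).liftQ ψ hker) ∘ₗ d.quotKerEquivRange.symm.toLinearMap with hψ'
  have hψ'' : ∀ w, ψ' ⟨d w, LinearMap.mem_range_self d w⟩ = ψ w := by
    intro w
    show ((LinearMap.ker d).liftQ ψ hker)
      (d.quotKerEquivRange.symm ⟨d w, LinearMap.mem_range_self d w⟩) = ψ w
    rw [LinearMap.quotKerEquivRange_symm_apply_image d w (LinearMap.mem_range_self d w)]
    simp
  refine ⟨ψ' ∘ₗ φ, ?_⟩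
  ext w
  simp only [LinearMap.comp_apply, LinearMap.smul_apply]
  have h1 : φ (d w) = r • (⟨d w, LinearMap.mem_range_self d w⟩ : Kn P j) :=
    hφ' ⟨d w, LinearMap.mem_range_self d w⟩
  rw [h1, map_smul, hψ'' w]

lemma Efac_of_kill {j : ℕ} {r : A}
    (h : ∀ x : ExtM A (j+1) W (ModuleCat.of A (Kn P j)), r • x = 0) : Efac P j r := by
  rw [CAProof.ext_kill_iff W (ModuleCat.of A (Kn P j)) P j r] at h
  set d : P.complex.X (j+1) →ₗ[A] P.complex.X j := (P.complex.d (j+1) j).hom with hd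
  have hco : (d.rangeRestrict : P.complex.X (j+1) →ₗ[A] (ModuleCat.of A (Kn P j)))
      ∘ₗ (P.complex.d (j+2) (j+1)).hom = 0 := by
    ext z
    show d ((P.complex.d (j+2) (j+1)).hom z) = (0 : P.complex.X j)
    exact LinearMap.congr_fun (congrArg ModuleCat.Hom.hom
      (P.complex.d_comp_d (j+2) (j+1) j)) z
  obtain ⟨χ, hχ⟩ := h d.rangeRestrict hco
  refine ⟨χ, ?_⟩
  ext y
  obtain ⟨w, hw⟩ := y.2
  have h2 := LinearMap.congr_fun hχ w
  simp only [LinearMap.comp_apply, LinearMap.smul_apply] at h2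
  have h3 : χ ((y : Kn P j) : P.complex.X j) = r • y := by
    have h1 : ((y : Kn P j) : P.complex.X j) = d w := hw.symm
    rw [h1, h2]
    apply Subtype.ext
    show r • d w = r • ((y : Kn P j) : P.complex.X j)
    rw [hw]
  exact congrArg Subtype.val h3

theorem mem_caN_iff {j : ℕ} (hfin : ∀ i, Module.Finite A (P.complex.X i))
    (hp : ∀ i, Module.Projective A (P.complex.X i)) (r : A) :
    r ∈ caN A (j+1) W ↔ Efac P j r := by
  constructor
  · intro h
    refine Efac_of_kill P ?_
    have : Module.Finite A (Kn P j) := by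
      have := hfin (j+1)
      exact Module.Finite.range (P.complex.d (j+1) j).hom
    exact h (j+1) le_rfl (ModuleCat.of A (Kn P j)) this
  · intro h i hi N _ x
    obtain ⟨j', rfl⟩ : ∃ j', i = j' + 1 := ⟨i - 1, by omega⟩
    exact kill_of_Efac P (Efac_mono P hp h j' (by omega)) N x



end Char

section Builder

variable {A : Type u} [CommRing A]
variable (X : ℕ → ModuleCat.{u} A) (d : ∀ n, X (n+1) →ₗ[A] X n)
variable (W : ModuleCat.{u} A) (π0 : X 0 →ₗ[A] W)

/-- the candidate resolution complex -/
def resComplex (hex : ∀ n, LinearMap.ker (d n) = LinearMap.range (d (n+1))) :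
    ChainComplex (ModuleCat.{u} A) ℕ :=
  ChainComplex.of X (fun n => ModuleCat.ofHom (d n)) (by
    intro n
    ext x
    show d n (d (n+1) x) = 0
    rw [← LinearMap.mem_ker, hex n]
    exact LinearMap.mem_range_self _ x)

lemma resComplex_d (hex : ∀ n, LinearMap.ker (d n) = LinearMap.range (d (n+1))) (n : ℕ) :
    (resComplex X d hex).d (n+1) n = ModuleCat.ofHom (d n) := by
  unfold resComplex
  exact ChainComplex.of_d X (fun n => ModuleCat.ofHom (d n)) n

def resOfSeq (hproj : ∀ n, Projective (X n))
    (hsurj : Function.Surjective π0)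
    (hex0 : LinearMap.ker π0 = LinearMap.range (d 0))
    (hex : ∀ n, LinearMap.ker (d n) = LinearMap.range (d (n+1))) :
    ProjectiveResolution W where
  complex := resComplex X d hex
  projective n := hproj n
  π := (ChainComplex.toSingle₀Equiv _ _).symm ⟨ModuleCat.ofHom π0, by
    rw [show (resComplex X d hex).d 1 0 = ModuleCat.ofHom (d 0) from ChainComplex.of_d X (fun n => ModuleCat.ofHom (d n)) 0]
    ext x
    show π0 (d 0 x) = 0
    rw [← LinearMap.mem_ker, hex0]
    exact LinearMap.mem_range_self _ x⟩
  quasiIso := ⟨by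
    intro n
    cases n with
    | zero =>
      rw [ChainComplex.quasiIsoAt₀_iff, ShortComplex.quasiIso_iff_of_zeros']
      · constructor
        · rw [ShortComplex.moduleCat_exact_iff]
          intro x hx
          have hx' : π0 x = 0 := hx
          have hmem : x ∈ LinearMap.range (d 0) :=
            (SetLike.ext_iff.mp hex0 (show X 0 from x)).mp (LinearMap.mem_ker.mpr hx')
          obtain ⟨w, hw⟩ := hmem
          refine ⟨w, ?_⟩
          show ((resComplex X d hex).d 1 0) w = x
          rw [resComplex_d X d hex 0]
          exact hw
        · exact (ModuleCat.epi_iff_surjective _).2 hsurj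
      all_goals rfl
    | succ n =>
      rw [quasiIsoAt_iff_exactAt']
      · rw [HomologicalComplex.exactAt_iff' _ (n+2) (n+1) n (by simp) (by simp)]
        rw [ShortComplex.moduleCat_exact_iff]
        intro x hx
        have hx' : d n x = 0 := by
          have h2 : ((resComplex X d hex).d (n+1) n) x = 0 := hx
          rw [resComplex_d X d hex n] at h2
          exact h2
        have hmem : x ∈ LinearMap.range (d (n+1)) :=
          (SetLike.ext_iff.mp (hex n) (show X (n+1) from x)).mp (LinearMap.mem_ker.mpr hx')
        obtain ⟨w, hw⟩ := hmem
        refine ⟨w, ?_⟩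
        show ((resComplex X d hex).d (n+2) (n+1)) w = x
        rw [resComplex_d X d hex (n+1)]
        exact hw
      · apply ChainComplex.exactAt_succ_single_obj⟩



end Builder

section Conc

variable (R : Type u) [CommRing R] [IsNoetherianRing R]

/-- A bundled finitely generated module. -/
structure FGMod where
  V : ModuleCat.{u} R
  fin : Module.Finite R V

attribute [instance] FGMod.fin

variable {R}

noncomputable def covnum (B : FGMod R) : ℕ := (Module.Finite.exists_fin' R B.V).choose

noncomputable def covmap (B : FGMod R) : (Fin (covnum B) → R) →ₗ[R] B.V :=
  (Module.Finite.exists_fin' R B.V).choose_spec.choose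

lemma covmap_surj (B : FGMod R) : Function.Surjective (covmap B) :=
  (Module.Finite.exists_fin' R B.V).choose_spec.choose_spec

lemma ker_fin (B : FGMod R) : Module.Finite R (LinearMap.ker (covmap B)) := by
  haveI : IsNoetherian R (Fin (covnum B) → R) := inferInstance
  exact Module.Finite.iff_fg.mpr (IsNoetherian.noetherian _)

variable (M : ModuleCat.{u} R) [Module.Finite R M]

noncomputable def syzC : ℕ → FGMod R
  | 0 => ⟨M, ‹_›⟩
  | (i+1) => ⟨ModuleCat.of R (LinearMap.ker (covmap (syzC i))), ker_fin _⟩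

/-- The free modules in our chosen resolution. -/
noncomputable def XR (i : ℕ) : ModuleCat.{u} R :=
  ModuleCat.of R (Fin (covnum (syzC M i)) → R)

noncomputable def cR (i : ℕ) : XR M i →ₗ[R] (syzC M i).V := covmap (syzC M i)

lemma cR_surj (i : ℕ) : Function.Surjective (cR M i) := covmap_surj _

noncomputable def ιR (i : ℕ) : (syzC M (i+1)).V →ₗ[R] XR M i :=
  (LinearMap.ker (cR M i)).subtype

lemma ιR_inj (i : ℕ) : Function.Injective (ιR M i) := Subtype.val_injective

noncomputable def dR (i : ℕ) : XR M (i+1) →ₗ[R] XR M i := (ιR M i) ∘ₗ (cR M (i+1))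

/-- identify the `(i+1)`-st syzygy object with the kernel submodule (definitional). -/
def toKer (i : ℕ) (y : (syzC M (i+1)).V) : LinearMap.ker (cR M i) := y

lemma ιR_apply (i : ℕ) (y : (syzC M (i+1)).V) : ιR M i y = (toKer M i y : XR M i) := rfl

lemma range_dR (i : ℕ) : LinearMap.range (dR M i) = LinearMap.ker (cR M i) := by
  ext x
  constructor
  · rintro ⟨w, rfl⟩
    exact (toKer M i (cR M (i+1) w)).2
  · intro hx
    obtain ⟨w, hw⟩ := cR_surj M (i+1) ((⟨x, hx⟩ : LinearMap.ker (cR M i)) : (syzC M (i+1)).V)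
    refine ⟨w, ?_⟩
    show ιR M i (cR M (i+1) w) = x
    rw [hw]
    rfl

lemma ker_dR (n : ℕ) : LinearMap.ker (dR M n) = LinearMap.range (dR M (n+1)) := by
  rw [range_dR]
  ext x
  constructor
  · intro hx
    rw [LinearMap.mem_ker] at hx ⊢
    have h2 : toKer M n (cR M (n+1) x) = 0 := Subtype.ext hx
    exact h2
  · intro hx
    rw [LinearMap.mem_ker] at hx ⊢
    show ιR M n (cR M (n+1) x) = 0
    rw [hx]
    rfl

lemma hex0R : LinearMap.ker (cR M 0) = LinearMap.range (dR M 0) := (range_dR M 0).symm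

instance (i : ℕ) : Module.Finite R (XR M i) :=
  inferInstanceAs (Module.Finite R (Fin (covnum (syzC M i)) → R))

lemma XR_projective (i : ℕ) : Module.Projective R (XR M i) :=
  Module.Projective.of_basis (Pi.basisFun R (Fin (covnum (syzC M i))))

lemma XR_cat_projective (i : ℕ) : Projective (XR M i) :=
  ModuleCat.projective_of_free (Pi.basisFun R (Fin (covnum (syzC M i))))



end Conc

section Bridge

variable {R : Type u} [CommRing R] (S : Submonoid R)

/-- `r • id` on `K` extends to the ambient module. -/
def EfacC {A : Type u} [CommRing A] {V : Type u} [AddCommGroup V] [Module A V]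
    (K : Submodule A V) (r : A) : Prop :=
  ∃ φ : V →ₗ[A] K, φ ∘ₗ K.subtype = r • LinearMap.id

lemma EfacC_congr {A : Type u} [CommRing A] {V : Type u} [AddCommGroup V] [Module A V]
    {K K' : Submodule A V} (h : K = K') (r : A) : EfacC K r ↔ EfacC K' r := by
  subst h; rfl

variable {V : Type u} [AddCommGroup V] [Module R V]

local notation "A'" => Localization S

/-- membership descent for localized submodules -/
lemma mem_localized_descend (K : Submodule R V) (w : V)
    (h : LocalizedModule.mkLinearMap S V w ∈ K.localized' A' S (LocalizedModule.mkLinearMap S V)) :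
    ∃ u : S, (u : R) • w ∈ K := by
  obtain ⟨k, hk, s, hmk⟩ := h
  rw [← IsLocalizedModule.mk_eq_mk'] at hmk
  have hmk' : LocalizedModule.mk k s = LocalizedModule.mk w 1 := hmk
  rw [LocalizedModule.mk_eq] at hmk'
  obtain ⟨u, hu⟩ := hmk'
  refine ⟨u * s, ?_⟩
  have : (u : R) • (1 : S) • k = (u : R) • (s : R) • w := by
    exact_mod_cast hu
  rw [one_smul] at this
  rw [show ((u * s : S) : R) • w = (u : R) • (s : R) • w by
    rw [Submonoid.coe_mul, mul_smul]]
  rw [← this]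
  exact K.smul_mem _ hk

lemma mk_eq_descend (a b : V) (h : LocalizedModule.mk a (1 : S) = LocalizedModule.mk b 1) :
    ∃ u : S, (u : R) • a = (u : R) • b := by
  rw [LocalizedModule.mk_eq] at h
  obtain ⟨u, hu⟩ := h
  refine ⟨u, ?_⟩
  simpa [Submonoid.smul_def] using hu

/-- Forward: a factorization over `R` localizes. -/
lemma EfacC_fwd (K : Submodule R V) (r : R) (h : EfacC K r) :
    EfacC (K.localized' A' S (LocalizedModule.mkLinearMap S V)) (algebraMap R A' r) := by
  obtain ⟨φ, hφ⟩ := h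
  have hφ' : ∀ k : K, ((φ (k : V)) : V) = r • (k : V) := by
    intro k
    have := LinearMap.congr_fun hφ k
    simp only [LinearMap.comp_apply, Submodule.subtype_apply, LinearMap.smul_apply,
      LinearMap.id_apply] at this
    rw [this]
    rfl
  set ξ : V →ₗ[R] V := K.subtype ∘ₗ φ with hξ
  set ξ' : LocalizedModule S V →ₗ[A'] LocalizedModule S V := LocalizedModule.map S ξ with hξ'
  have hran : ∀ z, ξ' z ∈ K.localized' A' S (LocalizedModule.mkLinearMap S V) := by
    intro z
    induction z using LocalizedModule.induction_on with
    | h v s =>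
      rw [hξ', LocalizedModule.map_mk]
      exact ⟨ξ v, (φ v).2, s, by rw [← IsLocalizedModule.mk_eq_mk']⟩
  refine ⟨ξ'.codRestrict _ hran, ?_⟩
  ext y
  show ξ' ((y : LocalizedModule S V)) = algebraMap R A' r • (y : LocalizedModule S V)
  obtain ⟨k, hk, s, hmk⟩ := y.2
  rw [← IsLocalizedModule.mk_eq_mk'] at hmk
  rw [← hmk, hξ', LocalizedModule.map_mk]
  have h1 : ξ k = r • k := by
    have := hφ' ⟨k, hk⟩
    simpa [hξ] using this
  rw [h1, ← LocalizedModule.smul'_mk, algebraMap_smul]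

/-- Backward: a factorization over the localization descends up to a denominator. -/
lemma EfacC_bwd [IsNoetherian R V] [Module.Finite R V] [Module.Projective R V]
    (K : Submodule R V) (x : A')
    (h : EfacC (K.localized' A' S (LocalizedModule.mkLinearMap S V)) x) :
    ∃ (r' : R) (s' : S), x * algebraMap R A' (s' : R) = algebraMap R A' r' ∧ EfacC K r' := by
  classical
  obtain ⟨φ', hφ'⟩ := h
  have hξ'' : ∀ w, w ∈ (K.localized' A' S (LocalizedModule.mkLinearMap S V)) → ((K.localized' A' S (LocalizedModule.mkLinearMap S V)).subtype ∘ₗ φ') w = x • w := by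
    intro w hw
    have h0 := LinearMap.congr_fun hφ' (⟨w, hw⟩ : (K.localized' A' S (LocalizedModule.mkLinearMap S V)))
    simp only [LinearMap.comp_apply, Submodule.subtype_apply, LinearMap.smul_apply,
      LinearMap.id_apply] at h0
    have h1 : ((K.localized' A' S (LocalizedModule.mkLinearMap S V)).subtype ∘ₗ φ') w = ((φ' w : (K.localized' A' S (LocalizedModule.mkLinearMap S V))) : LocalizedModule S V) := rfl
    rw [h1, h0]
    rfl
  haveI : Module.FinitePresentation R V := Module.finitePresentation_of_projective R V
  obtain ⟨ψ₀, s₀, hlift⟩ := Module.FinitePresentation.exists_lift_of_isLocalizedModule S (LocalizedModule.mkLinearMap S V)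
    ((((K.localized' A' S (LocalizedModule.mkLinearMap S V)).subtype ∘ₗ φ').restrictScalars R) ∘ₗ (LocalizedModule.mkLinearMap S V))
  have hlift' : ∀ v, (LocalizedModule.mkLinearMap S V) (ψ₀ v) = (s₀ : R) • ((K.localized' A' S (LocalizedModule.mkLinearMap S V)).subtype ∘ₗ φ') ((LocalizedModule.mkLinearMap S V) v) := by
    intro v
    have h0 := LinearMap.congr_fun hlift v
    simpa [Submonoid.smul_def] using h0
  have hmemK' : ∀ v, (LocalizedModule.mkLinearMap S V) (ψ₀ v) ∈ (K.localized' A' S (LocalizedModule.mkLinearMap S V)) := by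
    intro v
    rw [hlift' v]
    refine Submodule.smul_of_tower_mem _ _ ?_
    have h0 : ((K.localized' A' S (LocalizedModule.mkLinearMap S V)).subtype ∘ₗ φ') ((LocalizedModule.mkLinearMap S V) v) = (K.localized' A' S (LocalizedModule.mkLinearMap S V)).subtype (φ' ((LocalizedModule.mkLinearMap S V) v)) := rfl
    rw [h0]
    exact (φ' ((LocalizedModule.mkLinearMap S V) v)).2
  have hdesc : ∀ v, ∃ u : S, (u : R) • ψ₀ v ∈ K := fun v =>
    mem_localized_descend S K (ψ₀ v) (hmemK' v)
  choose uf huf using hdesc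
  obtain ⟨G, hG⟩ := Module.Finite.fg_top (R := R) (M := V)
  obtain ⟨t₀, ht₀eq⟩ : ∃ t : S, (t : R) = ∏ g ∈ G, (uf g : R) :=
    ⟨⟨∏ g ∈ G, (uf g : R), Submonoid.prod_mem S (fun g _ => (uf g).2)⟩, rfl⟩
  have ht₀mem : ∀ v, ((t₀ : R) • ψ₀) v ∈ K := by
    intro v
    have hle : (⊤ : Submodule R V) ≤ Submodule.comap ((t₀ : R) • ψ₀) K := by
      rw [← hG, Submodule.span_le]
      intro g hg
      simp only [SetLike.mem_coe, Submodule.mem_comap, LinearMap.smul_apply]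
      rw [ht₀eq, ← Finset.mul_prod_erase G (fun g => ((uf g : R))) hg, mul_comm, mul_smul]
      exact K.smul_mem _ (huf g)
    exact hle Submodule.mem_top
  set ψ₁ : V →ₗ[R] K := ((t₀ : R) • ψ₀).codRestrict K ht₀mem with hψ₁
  obtain ⟨⟨r, s⟩, hrs⟩ := IsLocalization.mk'_surjective S x
  have hxs : x * algebraMap R A' (s : R) = algebraMap R A' r := by
    rw [← hrs]
    exact IsLocalization.mk'_spec A' r s
  have hkey : ∀ k, k ∈ K → ∃ u : S,
      ((u : R) * ((t₀ : R) * ((s₀ : R) * r))) • k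
        = ((u : R) * (s : R)) • ((ψ₁ k : K) : V) := by
    intro k hk
    have hz : (LocalizedModule.mkLinearMap S V) k ∈ (K.localized' A' S (LocalizedModule.mkLinearMap S V)) := ⟨k, hk, 1, by rw [IsLocalizedModule.mk'_one]⟩
    have e1 : (LocalizedModule.mkLinearMap S V) (((ψ₁ k : K) : V)) = (t₀ : R) • ((s₀ : R) • ((K.localized' A' S (LocalizedModule.mkLinearMap S V)).subtype ∘ₗ φ') ((LocalizedModule.mkLinearMap S V) k)) := by
      show (LocalizedModule.mkLinearMap S V) ((t₀ : R) • ψ₀ k) = _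
      rw [map_smul, hlift' k]
    have e2 : ((K.localized' A' S (LocalizedModule.mkLinearMap S V)).subtype ∘ₗ φ') ((LocalizedModule.mkLinearMap S V) k) = x • (LocalizedModule.mkLinearMap S V) k := hξ'' _ hz
    have e3 : (s : R) • (x • (LocalizedModule.mkLinearMap S V) k) = r • (LocalizedModule.mkLinearMap S V) k := by
      rw [← algebraMap_smul A' (s : R) (x • (LocalizedModule.mkLinearMap S V) k), smul_smul, mul_comm, hxs,
        algebraMap_smul]
    have e4 : (LocalizedModule.mkLinearMap S V) ((s : R) • ((ψ₁ k : K) : V)) = (LocalizedModule.mkLinearMap S V) (((t₀ : R) * ((s₀ : R) * r)) • k) := by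
      rw [map_smul, e1, e2]
      rw [smul_comm (s : R) (t₀ : R), smul_comm (s : R) (s₀ : R), e3]
      rw [map_smul, smul_smul, smul_smul, mul_assoc]
    obtain ⟨u, hu⟩ := mk_eq_descend S _ _ e4
    refine ⟨u, ?_⟩
    rw [mul_smul, ← hu, smul_smul]
  obtain ⟨GK, hGK⟩ := IsNoetherian.noetherian K
  have hmemGK : ∀ g ∈ GK, g ∈ K := fun g hg => hGK ▸ Submodule.subset_span hg
  choose ug hug using fun g : {y // y ∈ GK} => hkey (g : V) (hmemGK _ g.2)
  obtain ⟨u₁, hu₁eq⟩ : ∃ t : S, (t : R) = ∏ g ∈ GK.attach, (ug g : R) :=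
    ⟨⟨∏ g ∈ GK.attach, (ug g : R), Submonoid.prod_mem S (fun g _ => (ug g).2)⟩, rfl⟩
  set c₁ : R := (u₁ : R) * ((t₀ : R) * ((s₀ : R) * r)) with hc₁
  set c₂ : R := (u₁ : R) * (s : R) with hc₂
  have hKE : ∀ k, k ∈ K → c₁ • k = c₂ • ((ψ₁ k : K) : V) := by
    intro k hk
    rw [← hGK] at hk
    induction hk using Submodule.span_induction with
    | mem g hg =>
      have hrest := hug ⟨g, hg⟩
      have hsplit : (u₁ : R) = (ug ⟨g, hg⟩ : R) * ∏ g' ∈ GK.attach.erase ⟨g, hg⟩, (ug g' : R) := by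
        rw [hu₁eq]
        exact (Finset.mul_prod_erase GK.attach (fun g => ((ug g : R))) (Finset.mem_attach _ _)).symm
      set cc := ∏ g' ∈ GK.attach.erase ⟨g, hg⟩, (ug g' : R) with hcc
      rw [hc₁, hc₂, hsplit]
      calc (((ug ⟨g, hg⟩ : R) * cc) * ((t₀ : R) * ((s₀ : R) * r))) • g
          = cc • ((((ug ⟨g, hg⟩ : R)) * ((t₀ : R) * ((s₀ : R) * r))) • g) := by
            rw [smul_smul]; ring_nf
        _ = cc • ((((ug ⟨g, hg⟩ : R)) * (s : R)) • ((ψ₁ g : K) : V)) := by rw [hrest]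
        _ = (((ug ⟨g, hg⟩ : R) * cc) * (s : R)) • ((ψ₁ g : K) : V) := by
            rw [smul_smul]; ring_nf
    | zero => simp
    | add y z _ _ hy hz =>
      rw [smul_add, hy, hz, map_add, Submodule.coe_add, smul_add]
    | smul a y _ hy =>
      calc c₁ • (a • y) = a • (c₁ • y) := smul_comm _ _ _
        _ = a • (c₂ • ((ψ₁ y : K) : V)) := by rw [hy]
        _ = c₂ • (a • ((ψ₁ y : K) : V)) := smul_comm _ _ _
        _ = c₂ • ((ψ₁ (a • y) : K) : V) := by rw [map_smul]; simp
  refine ⟨c₁, u₁ * t₀ * s₀ * s, ?_, ?_⟩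
  · have hcoe : ((u₁ * t₀ * s₀ * s : S) : R) = (u₁ : R) * (t₀ : R) * (s₀ : R) * (s : R) := rfl
    rw [hcoe, map_mul, map_mul, map_mul, hc₁, map_mul, map_mul, map_mul]
    have hring : x * ((algebraMap R A') (u₁ : R) * (algebraMap R A') (t₀ : R) *
        (algebraMap R A') (s₀ : R) * (algebraMap R A') (s : R))
        = (x * (algebraMap R A') (s : R)) * ((algebraMap R A') (u₁ : R) *
          (algebraMap R A') (t₀ : R) * (algebraMap R A') (s₀ : R)) := by ring
    rw [hring, hxs]
    ring
  · refine ⟨c₂ • ψ₁, ?_⟩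
    ext k
    show c₂ • ((ψ₁ ((k : K) : V) : K) : V) = c₁ • ((k : K) : V)
    rw [← hKE _ k.2]



end Bridge


section Final

variable {R : Type u} [CommRing R] [IsNoetherianRing R]
  (M : ModuleCat.{u} R) [Module.Finite R M] (S : Submonoid R)

/-- our chosen f.g. free resolution of `M`. -/
def PRres : ProjectiveResolution M :=
  resOfSeq (XR M) (dR M) M (cR M 0) (fun i => XR_cat_projective M i) (cR_surj M 0)
    (hex0R M) (fun n => ker_dR M n)

def XL (i : ℕ) : ModuleCat.{u} (Localization S) :=
  ModuleCat.of (Localization S) (LocalizedModule S (XR M i))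

def dL (i : ℕ) : XL M S (i+1) →ₗ[Localization S] XL M S i :=
  LocalizedModule.map S (dR M i)

def ML : ModuleCat.{u} (Localization S) :=
  ModuleCat.of (Localization S) (LocalizedModule S M)

def πL : XL M S 0 →ₗ[Localization S] ML M S := LocalizedModule.map S (cR M 0)

lemma XL_modproj (i : ℕ) :
    Module.Projective (Localization S) (LocalizedModule S (XR M i)) := by
  haveI := XR_projective M i
  exact Module.projective_of_isLocalizedModule S (LocalizedModule.mkLinearMap S (XR M i))

lemma XL_projective (i : ℕ) : Projective (XL M S i) :=
  by haveI := XL_modproj M S i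
     exact ModuleCat.projective_of_categoryTheory_projective
      (ModuleCat.of (Localization S) (LocalizedModule S (XR M i)))

lemma XL_finite (i : ℕ) : Module.Finite (Localization S) (LocalizedModule S (XR M i)) :=
  Module.Finite.of_isLocalizedModule S (LocalizedModule.mkLinearMap S (XR M i))

lemma exL (n : ℕ) : LinearMap.ker (dL M S n) = LinearMap.range (dL M S (n+1)) := by
  have hR : Function.Exact (dR M (n+1)) (dR M n) := LinearMap.exact_iff.mpr (ker_dR M n)
  have hL : Function.Exact (dL M S (n+1)) (dL M S n) :=
    IsLocalizedModule.map_exact S (LocalizedModule.mkLinearMap S (XR M (n+2)))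
      (LocalizedModule.mkLinearMap S (XR M (n+1))) (LocalizedModule.mkLinearMap S (XR M n))
      (dR M (n+1)) (dR M n) hR
  exact LinearMap.exact_iff.mp hL

lemma ex0L : LinearMap.ker (πL M S) = LinearMap.range (dL M S 0) := by
  have hR : Function.Exact (dR M 0) (cR M 0) := LinearMap.exact_iff.mpr (hex0R M)
  have hL : Function.Exact (dL M S 0) (πL M S) :=
    IsLocalizedModule.map_exact S (LocalizedModule.mkLinearMap S (XR M 1))
      (LocalizedModule.mkLinearMap S (XR M 0)) (LocalizedModule.mkLinearMap S M)
      (dR M 0) (cR M 0) hR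
  exact LinearMap.exact_iff.mp hL

lemma surjL : Function.Surjective (πL M S) :=
  IsLocalizedModule.map_surjective S (LocalizedModule.mkLinearMap S (XR M 0))
    (LocalizedModule.mkLinearMap S M) (cR M 0) (cR_surj M 0)

/-- the localized resolution of the localized module. -/
def PRloc : ProjectiveResolution (ML M S) :=
  resOfSeq (XL M S) (dL M S) (ML M S) (πL M S) (fun i => XL_projective M S i)
    (surjL M S) (ex0L M S) (fun n => exL M S n)

lemma KnR_eq (m : ℕ) : Kn (PRres M) m = LinearMap.range (dR M m) := by
  show LinearMap.range ((PRres M).complex.d (m+1) m).hom = _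
  rw [show (PRres M).complex.d (m+1) m = ModuleCat.ofHom (dR M m) from
    resComplex_d (XR M) (dR M) (fun n => ker_dR M n) m]
  rfl

lemma KnL_eq (m : ℕ) : Kn (PRloc M S) m = LinearMap.range (dL M S m) := by
  show LinearMap.range ((PRloc M S).complex.d (m+1) m).hom = _
  rw [show (PRloc M S).complex.d (m+1) m = ModuleCat.ofHom (dL M S m) from
    resComplex_d (XL M S) (dL M S) (fun n => exL M S n) m]
  rfl

lemma KnL_eq' (m : ℕ) : LinearMap.range (dL M S m)
    = (LinearMap.range (dR M m)).localized' (Localization S) S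
        (LocalizedModule.mkLinearMap S (XR M m)) :=
  (LinearMap.localized'_range_eq_range_localizedMap (S := Localization S) (p := S)
    (f := LocalizedModule.mkLinearMap S (XR M (m+1)))
    (f' := LocalizedModule.mkLinearMap S (XR M m))
    (dR M m)).symm

theorem charR (m : ℕ) (r : R) :
    r ∈ caN R (m+1) M ↔ EfacC (LinearMap.range (dR M m)) r := by
  rw [mem_caN_iff (PRres M) (fun i => inferInstanceAs (Module.Finite R (XR M i)))
    (fun i => XR_projective M i) r]
  exact EfacC_congr (KnR_eq M m) r

theorem charL (m : ℕ) (x : Localization S) :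
    x ∈ caN (Localization S) (m+1) (ML M S) ↔
      EfacC ((LinearMap.range (dR M m)).localized' (Localization S) S
        (LocalizedModule.mkLinearMap S (XR M m))) x := by
  rw [mem_caN_iff (PRloc M S) (fun i => XL_finite M S i) (fun i => XL_modproj M S i) x]
  exact EfacC_congr ((KnL_eq M S m).trans (KnL_eq' M S m)) x

end Final


end CAaux

end AuxCA

/-- `S⁻¹(ca_R^n(M)) = ca_{S⁻¹R}^n(S⁻¹M)` for `n ≥ 1`. -/
theorem stmt4 (R : Type u) [CommRing R] [IsNoetherianRing R]
    (M : ModuleCat.{u} R) [Module.Finite R M] (S : Submonoid R) (n : ℕ) (hn : 1 ≤ n) :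
    Ideal.map (algebraMap R (Localization S)) (caN R n M) =
      caN (Localization S) n (ModuleCat.of (Localization S) (LocalizedModule S M)) := by
  obtain ⟨m, rfl⟩ : ∃ m, n = m + 1 := ⟨n - 1, by omega⟩
  haveI := CAaux.XR_projective M m
  apply le_antisymm
  · rw [Ideal.map_le_iff_le_comap]
    intro r hr
    rw [Ideal.mem_comap]
    show (algebraMap R (Localization S)) r ∈ caN (Localization S) (m+1) (CAaux.ML M S)
    rw [CAaux.charL M S m]
    exact CAaux.EfacC_fwd S _ r ((CAaux.charR M m r).mp hr)
  · intro x hx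
    have hx' : x ∈ caN (Localization S) (m+1) (CAaux.ML M S) := hx
    rw [CAaux.charL M S m] at hx'
    obtain ⟨r', s', hmul, hE⟩ := CAaux.EfacC_bwd S (LinearMap.range (CAaux.dR M m)) x hx'
    have hr' : r' ∈ caN R (m+1) M := (CAaux.charR M m r').mpr hE
    rw [IsLocalization.mem_map_algebraMap_iff S (Localization S)]
    exact ⟨⟨⟨r', hr'⟩, s'⟩, hmul⟩
end

section
/- Let R be a commutative Noetherian ring and M a finitely generated R-module such that Ext_R^i(M,R) = 0 for all m ≤ i ≤ n. Then ca_R^m(M) = ca_R^{m+1}(M) = ⋯ = ca_R^{n+1}(M). -/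
open CategoryTheory

noncomputable section

universe v

variable {R : Type v} [CommRing R]

namespace Stmt6Aux

lemma subsingleton_of_iso {X Y : ModuleCat.{v} R} (e : X ≅ Y) (hY : Subsingleton Y) :
    Subsingleton X := by
  refine ⟨fun a b => ?_⟩
  have ha : e.inv (e.hom a) = a := ConcreteCategory.congr_hom e.hom_inv_id a
  have hb : e.inv (e.hom b) = b := ConcreteCategory.congr_hom e.hom_inv_id b
  rw [← ha, ← hb, Subsingleton.elim (e.hom a) (e.hom b)]

variable {M : ModuleCat.{v} R}

/-- Functoriality of `P.complex.linearYonedaObj R ·` in the second variable. -/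
def mapHc (P : ProjectiveResolution M) {A B : ModuleCat.{v} R} (f : A ⟶ B) :
    P.complex.linearYonedaObj R A ⟶ P.complex.linearYonedaObj R B where
  f j := ModuleCat.ofHom (Linear.rightComp R (P.complex.X j) f)
  comm' i j _ := by
    ext (g : P.complex.X i ⟶ A)
    show (P.complex.d j i ≫ g) ≫ f = P.complex.d j i ≫ (g ≫ f)
    rw [Category.assoc]

abbrev hc (P : ProjectiveResolution M) (N : ModuleCat.{v} R) := P.complex.linearYonedaObj R N

/-- The short complex of Hom complexes induced by `S`. -/
abbrev hcSC (P : ProjectiveResolution M) (S : ShortComplex (ModuleCat.{v} R)) : ShortComplex (CochainComplex (ModuleCat.{v} R) ℕ) :=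
  ShortComplex.mk (mapHc P S.f) (mapHc P S.g) (by
    ext j (g : P.complex.X j ⟶ S.X₁)
    show (g ≫ S.f) ≫ S.g = (0 : P.complex.X j ⟶ S.X₃)
    rw [Category.assoc, S.zero, Limits.comp_zero])

lemma hcSC_shortExact (P : ProjectiveResolution M) (S : ShortComplex (ModuleCat.{v} R)) (hS : S.ShortExact) : (hcSC P S).ShortExact := by
  have := hS.mono_f
  have := hS.epi_g
  apply HomologicalComplex.shortExact_of_degreewise_shortExact
  intro j
  have hmono : Mono ((hcSC P S).map (HomologicalComplex.eval _ _ j)).f := by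
    rw [ModuleCat.mono_iff_injective]
    intro g g' h
    exact (cancel_mono S.f).mp (show g ≫ S.f = g' ≫ S.f from h)
  have hepi : Epi ((hcSC P S).map (HomologicalComplex.eval _ _ j)).g := by
    rw [ModuleCat.epi_iff_surjective]
    intro (h : P.complex.X j ⟶ S.X₃)
    exact ⟨Projective.factorThru h S.g,
      show Projective.factorThru h S.g ≫ S.g = h from Projective.factorThru_comp _ _⟩
  refine { exact := ?_, mono_f := hmono, epi_g := hepi }
  · rw [ShortComplex.moduleCat_exact_iff]
    intro (g : P.complex.X j ⟶ S.X₂) hg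
    have hrk : LinearMap.range S.f.hom = LinearMap.ker S.g.hom :=
      hS.exact.moduleCat_range_eq_ker
    have hginj : Function.Injective S.f := (ModuleCat.mono_iff_injective S.f).mp hS.mono_f
    have hg' : g ≫ S.g = 0 := hg
    have hmem : ∀ x : P.complex.X j, g.hom x ∈ LinearMap.ker S.g.hom := by
      intro x
      have h2 : (g ≫ S.g) x = 0 := by rw [hg']; rfl
      simpa using h2
    let e := LinearEquiv.ofInjective S.f.hom hginj
    refine ⟨ModuleCat.ofHom (e.symm.toLinearMap ∘ₗ LinearMap.codRestrict (LinearMap.range S.f.hom)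
      g.hom (fun x => by rw [hrk]; exact hmem x)), ?_⟩
    show ModuleCat.ofHom (e.symm.toLinearMap ∘ₗ LinearMap.codRestrict _ _ _) ≫ S.f = g
    apply ModuleCat.hom_ext
    apply LinearMap.ext
    intro x
    show S.f (e.symm ⟨g x, _⟩) = g x
    have h3 := e.apply_symm_apply ⟨g x, by rw [hrk]; exact hmem x⟩
    exact congrArg Subtype.val h3

lemma key₂ (P : ProjectiveResolution M) (S : ShortComplex (ModuleCat.{v} R)) (i : ℕ) (hS : S.ShortExact)
    (h₁ : Subsingleton (ExtM R i M S.X₁)) (h₃ : Subsingleton (ExtM R i M S.X₃)) :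
    Subsingleton (ExtM R i M S.X₂) := by
  have hT := hcSC_shortExact P S hS
  haveI hh₁ : Subsingleton ((hc P S.X₁).homology i) :=
    subsingleton_of_iso (P.isoExt i S.X₁).symm h₁
  haveI hh₃ : Subsingleton ((hc P S.X₃).homology i) :=
    subsingleton_of_iso (P.isoExt i S.X₃).symm h₃
  have hex := hT.homology_exact₂ i
  rw [ShortComplex.moduleCat_exact_iff] at hex
  refine subsingleton_of_iso (P.isoExt i S.X₂) ?_
  refine ⟨fun a b => ?_⟩
  have h0 : ∀ x : (hc P S.X₂).homology i, x = 0 := by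
    intro x
    obtain ⟨y, hy⟩ := hex x (Subsingleton.elim _ 0)
    rw [← hy, Subsingleton.elim y 0, map_zero]
  rw [h0 a, h0 b]

lemma key₃ (P : ProjectiveResolution M) (S : ShortComplex (ModuleCat.{v} R)) (i : ℕ) (hS : S.ShortExact) (r : R)
    (h₂ : Subsingleton (ExtM R i M S.X₂))
    (h₁ : ∀ x : ExtM R (i + 1) M S.X₁, r • x = 0) :
    ∀ x : ExtM R i M S.X₃, r • x = 0 := by
  intro x
  have hT := hcSC_shortExact P S hS
  have hij : (ComplexShape.up ℕ).Rel i (i + 1) := by simp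
  let e₃ : ExtM R i M S.X₃ ≅ (hc P S.X₃).homology i := P.isoExt i S.X₃
  let e₁ : ExtM R (i + 1) M S.X₁ ≅ (hc P S.X₁).homology (i + 1) := P.isoExt (i + 1) S.X₁
  let y : (hc P S.X₃).homology i := e₃.hom x
  have hδ : (hT.δ i (i + 1) hij) (r • y) = 0 := by
    have h4 : (hT.δ i (i + 1) hij) (r • y) = r • (hT.δ i (i + 1) hij) y := map_smul _ _ _
    have h5 : (hT.δ i (i + 1) hij) y = e₁.hom (e₁.inv ((hT.δ i (i + 1) hij) y)) :=
      (ConcreteCategory.congr_hom e₁.inv_hom_id _).symm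
    rw [h4, h5, ← map_smul e₁.hom.hom, h₁, map_zero]
  have hex := hT.homology_exact₃ i (i + 1) hij
  rw [ShortComplex.moduleCat_exact_iff] at hex
  obtain ⟨z, hz⟩ := hex (r • y) hδ
  haveI : Subsingleton ((hc P S.X₂).homology i) :=
    subsingleton_of_iso (P.isoExt i S.X₂).symm h₂
  have hy0 : r • y = 0 := by rw [← hz, Subsingleton.elim z 0, map_zero]
  have hx : e₃.inv (e₃.hom x) = x := ConcreteCategory.congr_hom e₃.hom_inv_id x
  calc r • x = r • e₃.inv (e₃.hom x) := by rw [hx]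
    _ = e₃.inv (r • y) := (map_smul _ _ _).symm
    _ = e₃.inv 0 := by rw [hy0]
    _ = 0 := map_zero _


lemma subsingleton_ext_of_subsingleton (P : ProjectiveResolution M) (i : ℕ)
    (N : ModuleCat.{v} R) (hN : Subsingleton N) :
    Subsingleton (ExtM R i M N) := by
  refine subsingleton_of_iso (P.isoExt i N) ?_
  have hz : Limits.IsZero ((hc P N).X i) := by
    have : Subsingleton ((hc P N).X i) := by
      refine ⟨fun a b => ?_⟩
      show (a : P.complex.X i ⟶ N) = b
      apply ModuleCat.hom_ext
      apply LinearMap.ext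
      intro x
      exact Subsingleton.elim _ _
    exact ModuleCat.isZero_of_subsingleton _
  have hex : (hc P N).ExactAt i := by
    rw [HomologicalComplex.exactAt_iff]
    exact ShortComplex.exact_of_isZero_X₂ _ hz
  rw [HomologicalComplex.exactAt_iff_isZero_homology] at hex
  have hid : 𝟙 ((hc P N).homology i) = 0 := hex.eq_of_src _ _
  refine ⟨fun a b => ?_⟩
  have key : ∀ c : (hc P N).homology i, c = 0 := by
    intro c
    calc c = (𝟙 ((hc P N).homology i)) c := rfl
      _ = (0 : (hc P N).homology i ⟶ (hc P N).homology i) c := ConcreteCategory.congr_hom hid c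
      _ = 0 := rfl
  rw [key a, key b]

set_option maxHeartbeats 1000000 in
lemma subsingleton_ext_free (P : ProjectiveResolution M) (i : ℕ)
    (hR : Subsingleton (ExtM R i M (ModuleCat.of R R))) :
    ∀ t : ℕ, Subsingleton (ExtM R i M (ModuleCat.of R (Fin t → R))) := by
  intro t
  induction t with
  | zero =>
    refine subsingleton_ext_of_subsingleton P i _ ?_
    constructor
    intro a b
    funext j
    exact absurd j.2 (by omega)
  | succ t ih =>
    let fmap : ModuleCat.of R R ⟶ ModuleCat.of R (Fin (t + 1) → R) :=
      ModuleCat.ofHom (LinearMap.single R (fun _ : Fin (t + 1) => R) 0)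
    let gmap : ModuleCat.of R (Fin (t + 1) → R) ⟶ ModuleCat.of R (Fin t → R) :=
      ModuleCat.ofHom (LinearMap.funLeft R R Fin.succ)
    have hzero : fmap ≫ gmap = 0 := by
      apply ModuleCat.hom_ext
      apply LinearMap.ext
      intro x
      funext j
      show (Pi.single (0 : Fin (t + 1)) x : Fin (t + 1) → R) j.succ = 0
      exact Pi.single_eq_of_ne (Fin.succ_ne_zero j) x
    have hS : (ShortComplex.mk fmap gmap hzero).ShortExact := by
      have hmono : Mono fmap := by
        rw [ModuleCat.mono_iff_injective]
        intro a b hab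
        have h0 : (Pi.single (0 : Fin (t + 1)) a : Fin (t + 1) → R) 0 =
            (Pi.single (0 : Fin (t + 1)) b : Fin (t + 1) → R) 0 := congrFun hab 0
        rwa [Pi.single_eq_same, Pi.single_eq_same] at h0
      have hepi : Epi gmap := by
        rw [ModuleCat.epi_iff_surjective]
        intro v
        refine ⟨(Fin.cons (0 : R) (v : Fin t → R) : Fin (t + 1) → R), ?_⟩
        funext j
        show (Fin.cons (0 : R) (v : Fin t → R) : Fin (t + 1) → R) j.succ = v j
        rw [Fin.cons_succ]
      refine { exact := ?_, mono_f := hmono, epi_g := hepi }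
      rw [ShortComplex.moduleCat_exact_iff]
      intro v hv
      refine ⟨v 0, ?_⟩
      show (Pi.single 0 (v 0) : Fin (t + 1) → R) = v
      funext j
      induction j using Fin.cases with
      | zero => simp
      | succ j =>
        rw [Pi.single_eq_of_ne (Fin.succ_ne_zero j)]
        have h1 : (LinearMap.funLeft R R Fin.succ (v : Fin (t + 1) → R) : Fin t → R) j =
            (0 : Fin t → R) j := congrFun hv j
        simpa [LinearMap.funLeft_apply] using h1.symm
    have := key₂ P (ShortComplex.mk fmap gmap hzero) i hS hR ih
    exact this

lemma descent [IsNoetherianRing R] (P : ProjectiveResolution M) (r : R) (i : ℕ)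
    (hR : Subsingleton (ExtM R i M (ModuleCat.of R R)))
    (hr : ∀ N : ModuleCat.{v} R, Module.Finite R N → ∀ x : ExtM R (i + 1) M N, r • x = 0) :
    ∀ N : ModuleCat.{v} R, Module.Finite R N → ∀ x : ExtM R i M N, r • x = 0 := by
  intro N hN x
  obtain ⟨t, f, hf⟩ := Module.Finite.exists_fin' R N
  let K := ModuleCat.of R ↥(LinearMap.ker f)
  let fmap : K ⟶ ModuleCat.of R (Fin t → R) := ModuleCat.ofHom (LinearMap.ker f).subtype
  let gmap : ModuleCat.of R (Fin t → R) ⟶ N := ModuleCat.ofHom f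
  have hzero : fmap ≫ gmap = 0 := by
    apply ModuleCat.hom_ext
    apply LinearMap.ext
    intro y
    exact y.2
  have hS : (ShortComplex.mk fmap gmap hzero).ShortExact := by
    have hmono : Mono fmap := by
      rw [ModuleCat.mono_iff_injective]
      exact Subtype.val_injective
    have hepi : Epi gmap := by
      rw [ModuleCat.epi_iff_surjective]
      exact hf
    refine { exact := ?_, mono_f := hmono, epi_g := hepi }
    rw [ShortComplex.moduleCat_exact_iff]
    intro v hv
    exact ⟨⟨v, hv⟩, rfl⟩
  haveI hKfin : Module.Finite R ↥(LinearMap.ker f) :=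
    Module.Finite.iff_fg.mpr (IsNoetherian.noetherian _)
  exact key₃ P _ i hS r (subsingleton_ext_free P i hR t)
    (fun y => hr K hKfin y) x

end Stmt6Aux

end

/-- if `Ext^i(M,R) = 0` for `m ≤ i ≤ n`, then
`ca_R^m(M) = ca_R^{m+1}(M) = ⋯ = ca_R^{n+1}(M)`. -/
theorem stmt6 (R : Type u) [CommRing R] [IsNoetherianRing R]
    (M : ModuleCat.{u} R) [Module.Finite R M] (m n : ℕ) (hmn : m ≤ n)
    (h : ∀ i, m ≤ i → i ≤ n → Subsingleton (ExtM R i M (ModuleCat.of R R))) :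
    ∀ k, m ≤ k → k ≤ n + 1 → caN R m M = caN R k M := by
  intro k hk hk'
  have P : ProjectiveResolution M := ProjectiveResolution.of M
  apply le_antisymm
  · intro r hr
    have hr' : ∀ i, m ≤ i → ∀ N : ModuleCat.{u} R, Module.Finite R N →
        ∀ x : ExtM R i M N, r • x = 0 := hr
    intro i hi N hN x
    exact hr' i (hk.trans hi) N hN x
  · intro r hr
    have hr' : ∀ i, k ≤ i → ∀ N : ModuleCat.{u} R, Module.Finite R N →
        ∀ x : ExtM R i M N, r • x = 0 := hr
    have claim : ∀ d i, m ≤ i → k ≤ i + d → ∀ N : ModuleCat.{u} R, Module.Finite R N →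
        ∀ x : ExtM R i M N, r • x = 0 := by
      intro d
      induction d with
      | zero =>
        intro i him hik N hN x
        exact hr' i (by omega) N hN x
      | succ d ih =>
        intro i him hik N hN x
        by_cases hki : k ≤ i
        · exact hr' i hki N hN x
        · exact Stmt6Aux.descent P r i (h i him (by omega))
            (fun N' hN' => ih (i + 1) (by omega) (by omega) N' hN') N hN x
    intro i hi N hN x
    exact claim k i hi (by omega) N hN x
end

section
/- Let R be a Gorenstein ring and M a maximal Cohen–Macaulay R-module. Then ca_R^1(M) = ca_R(M). -/
open CategoryTheory

noncomputable section Stmt17AuxSec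
universe v
variable {R : Type v} [CommRing R]
namespace Stmt17Aux
variable {M : ModuleCat.{v} R} (P : ProjectiveResolution M)

def cmap {A B : ModuleCat.{v} R} (f : A ⟶ B) :
    P.complex.linearYonedaObj R A ⟶ P.complex.linearYonedaObj R B where
  f j := ModuleCat.ofHom (Linear.rightComp R (P.complex.X j) f)
  comm' i j _ := by
    apply ModuleCat.hom_ext; apply LinearMap.ext; intro g
    show (P.complex.d j i ≫ g) ≫ f = P.complex.d j i ≫ (g ≫ f)
    exact Category.assoc _ _ _

lemma cmap_comp {A B C : ModuleCat.{v} R} (f : A ⟶ B) (g : B ⟶ C) :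
    cmap P (f ≫ g) = cmap P f ≫ cmap P g := by
  apply HomologicalComplex.hom_ext; intro j
  apply ModuleCat.hom_ext; apply LinearMap.ext; intro u
  show u ≫ (f ≫ g) = (u ≫ f) ≫ g
  exact (Category.assoc _ _ _).symm

lemma cmap_id (A : ModuleCat.{v} R) : cmap P (𝟙 A) = 𝟙 _ := by
  apply HomologicalComplex.hom_ext; intro j
  apply ModuleCat.hom_ext; apply LinearMap.ext; intro u
  show u ≫ 𝟙 A = u
  exact Category.comp_id _

end Stmt17Aux

section
variable {M : ModuleCat.{v} R} (P : ProjectiveResolution M)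
open Stmt17Aux

lemma cmap_zero {A B : ModuleCat.{v} R} : cmap P (0 : A ⟶ B) = 0 := by
  apply HomologicalComplex.hom_ext; intro j
  rw [HomologicalComplex.zero_f]
  apply ModuleCat.hom_ext; apply LinearMap.ext; intro u
  show u ≫ (0 : A ⟶ B) = 0
  exact Limits.comp_zero

/-- The short complex of Hom-complexes induced by a short exact sequence. -/
def sc3 {A B C : ModuleCat.{v} R} (f : A ⟶ B) (g : B ⟶ C) (w : f ≫ g = 0) :
    ShortComplex (HomologicalComplex (ModuleCat.{v} R) (ComplexShape.up ℕ)) :=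
  ShortComplex.mk (cmap P f) (cmap P g) (by rw [← cmap_comp, w, cmap_zero])

lemma sc3_shortExact {A B C : ModuleCat.{v} R} (f : A ⟶ B) (g : B ⟶ C) (w : f ≫ g = 0)
    (hf : Function.Injective f) (hg : Function.Surjective g)
    (hker : LinearMap.ker g.hom = LinearMap.range f.hom) :
    (sc3 P f g w).ShortExact := by
  apply HomologicalComplex.shortExact_of_degreewise_shortExact
  intro j
  haveI : Epi g := (ModuleCat.epi_iff_surjective g).mpr hg
  haveI hmono : Mono ((sc3 P f g w).map (HomologicalComplex.eval (ModuleCat.{v} R) (ComplexShape.up ℕ) j)).f := by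
    rw [ModuleCat.mono_iff_injective]
    intro u₁ u₂ h
    apply ModuleCat.hom_ext; apply LinearMap.ext; intro x
    exact hf (congrArg (fun (v : P.complex.X j ⟶ B) => v x) h)
  haveI hepi : Epi ((sc3 P f g w).map (HomologicalComplex.eval (ModuleCat.{v} R) (ComplexShape.up ℕ) j)).g := by
    rw [ModuleCat.epi_iff_surjective]
    intro (u : P.complex.X j ⟶ C)
    exact ⟨Projective.factorThru u g, Projective.factorThru_comp u g⟩
  refine ⟨?_⟩
  · rw [ShortComplex.moduleCat_exact_iff]
    intro (u : P.complex.X j ⟶ B) hu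
    have hsub : ∀ x, u x ∈ LinearMap.range f.hom := by
      intro x
      rw [← hker]
      exact congrArg (fun (v : P.complex.X j ⟶ C) => v x) hu
    let e := LinearEquiv.ofInjective f.hom hf
    refine ⟨ModuleCat.ofHom (e.symm.toLinearMap ∘ₗ (LinearMap.codRestrict (LinearMap.range f.hom) u.hom hsub)), ?_⟩
    apply ModuleCat.hom_ext; apply LinearMap.ext; intro x
    show f (e.symm ⟨u x, hsub x⟩) = u x
    have := e.apply_symm_apply ⟨u x, hsub x⟩
    exact congrArg Subtype.val this
end

namespace Stmt17Aux

variable {M : ModuleCat.{v} R} (P : ProjectiveResolution M)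

abbrev HH (i : ℕ) (N : ModuleCat.{v} R) : ModuleCat.{v} R :=
  (P.complex.linearYonedaObj R N).homology i

lemma subsingleton_HH_R (hMCM : ∀ i : ℕ, 0 < i →
      Subsingleton (((Ext R (ModuleCat.{v} R) i).obj (Opposite.op M)).obj (ModuleCat.of R R)))
    (i : ℕ) (hi : 0 < i) : Subsingleton (HH P i (ModuleCat.of R R)) := by
  haveI := hMCM i hi
  exact Equiv.subsingleton ((P.isoExt i (ModuleCat.of R R)).toLinearEquiv.toEquiv.symm)

lemma subsingleton_HH_pi (hMCM : ∀ i : ℕ, 0 < i →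
      Subsingleton (((Ext R (ModuleCat.{v} R) i).obj (Opposite.op M)).obj (ModuleCat.of R R)))
    (i : ℕ) (hi : 0 < i) (k : ℕ) :
    Subsingleton (HH P i (ModuleCat.of R (Fin k → R))) := by
  induction k with
  | zero =>
    set Z := ModuleCat.of R (Fin 0 → R) with hZ
    haveI : Subsingleton (Z ⟶ Z) :=
      ⟨fun a b => ModuleCat.hom_ext (LinearMap.ext fun x => funext fun j => Fin.elim0 j)⟩
    have h1 : (𝟙 Z : Z ⟶ Z) = (0 : Z ⟶ ModuleCat.of R R) ≫ (0 : ModuleCat.of R R ⟶ Z) :=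
      Subsingleton.elim _ _
    apply subsingleton_of_forall_eq 0
    intro x
    have h2 : x = HomologicalComplex.homologyMap
        (cmap P ((0 : Z ⟶ ModuleCat.of R R) ≫ (0 : ModuleCat.of R R ⟶ Z))) i x := by
      rw [← h1, cmap_id, HomologicalComplex.homologyMap_id]
      rfl
    rw [h2, cmap_comp, HomologicalComplex.homologyMap_comp]
    haveI := subsingleton_HH_R P hMCM i hi
    show (HomologicalComplex.homologyMap (cmap P (0 : ModuleCat.of R R ⟶ Z)) i)
      ((HomologicalComplex.homologyMap (cmap P (0 : Z ⟶ ModuleCat.of R R)) i) x) = 0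
    rw [Subsingleton.elim (α := HH P i (ModuleCat.of R R))
      ((HomologicalComplex.homologyMap (cmap P (0 : Z ⟶ ModuleCat.of R R)) i) x) 0, map_zero]
  | succ k ih =>
    let f₀ : R →ₗ[R] (Fin (k+1) → R) := LinearMap.single R (fun _ : Fin (k+1) => R) 0
    let g₀ : (Fin (k+1) → R) →ₗ[R] (Fin k → R) := LinearMap.funLeft R R Fin.succ
    have hval : ∀ (x : R) (j : Fin k), g₀ (f₀ x) j = 0 := by
      intro x j
      show Pi.single (M := fun _ : Fin (k+1) => R) 0 x (Fin.succ j) = 0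
      exact Pi.single_eq_of_ne (Fin.succ_ne_zero j) x
    have hFinj : Function.Injective f₀ := by
      intro a b h
      have h0 := congrFun h (0 : Fin (k+1))
      simpa [f₀] using h0
    have hGsurj : Function.Surjective g₀ :=
      LinearMap.funLeft_surjective_of_injective R R _ (Fin.succ_injective k)
    have hker : LinearMap.ker g₀ = LinearMap.range f₀ := by
      ext v
      constructor
      · intro hv
        refine ⟨v 0, ?_⟩
        funext j
        refine Fin.cases ?_ ?_ j
        · exact Pi.single_eq_same (M := fun _ : Fin (k+1) => R) 0 (v 0)

        · intro j'
          have h0 : v (Fin.succ j') = 0 := congrFun (LinearMap.mem_ker.mp hv) j'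
          show Pi.single (M := fun _ : Fin (k+1) => R) 0 (v 0) (Fin.succ j') = v (Fin.succ j')
          rw [Pi.single_eq_of_ne (Fin.succ_ne_zero j'), h0]
      · rintro ⟨x, rfl⟩
        apply LinearMap.mem_ker.mpr
        funext j
        exact hval x j
    set F : ModuleCat.of R R ⟶ ModuleCat.of R (Fin (k+1) → R) := ModuleCat.ofHom f₀
    set G : ModuleCat.of R (Fin (k+1) → R) ⟶ ModuleCat.of R (Fin k → R) := ModuleCat.ofHom g₀
    have w : F ≫ G = 0 := ModuleCat.hom_ext (LinearMap.ext fun x => funext fun j => hval x j)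
    have hS := sc3_shortExact P F G w hFinj hGsurj hker
    have hex := hS.homology_exact₂ i
    rw [ShortComplex.moduleCat_exact_iff] at hex
    apply subsingleton_of_forall_eq 0
    intro x
    have hx : HomologicalComplex.homologyMap (sc3 P F G w).g i x = 0 :=
      Subsingleton.elim (α := HH P i (ModuleCat.of R (Fin k → R))) _ _
    obtain ⟨y, hy⟩ := hex x hx
    haveI := subsingleton_HH_R P hMCM i hi
    have hy0 : y = 0 := Subsingleton.elim (α := HH P i (ModuleCat.of R R)) _ _
    rw [← hy, hy0, map_zero]; rfl

end Stmt17Aux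

namespace Stmt17Aux

variable {M : ModuleCat.{v} R} (P : ProjectiveResolution M)

lemma exists_delta [IsNoetherianRing R]
    (hMCM : ∀ i : ℕ, 0 < i →
      Subsingleton (((Ext R (ModuleCat.{v} R) i).obj (Opposite.op M)).obj (ModuleCat.of R R)))
    (N : ModuleCat.{v} R) (hN : Module.Finite R N) (i : ℕ) (hi : 0 < i) :
    ∃ (K : ModuleCat.{v} R) (_ : Module.Finite R K) (φ : HH P i N ⟶ HH P (i+1) K),
      Function.Injective φ := by
  obtain ⟨k, π₀, hπ₀⟩ := Module.Finite.exists_fin' R N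
  let Kc := LinearMap.ker π₀
  haveI : IsNoetherian R (Fin k → R) := inferInstance
  haveI hKfin : Module.Finite R Kc := Module.Finite.iff_fg.mpr (IsNoetherian.noetherian Kc)
  let K : ModuleCat.{v} R := ModuleCat.of R Kc
  let F : ModuleCat.{v} R := ModuleCat.of R (Fin k → R)
  let f : K ⟶ F := ModuleCat.ofHom Kc.subtype
  let g : F ⟶ N := ModuleCat.ofHom π₀
  have w : f ≫ g = 0 := by
    apply ModuleCat.hom_ext; apply LinearMap.ext; intro ⟨x, hx⟩
    exact hx
  have hS := sc3_shortExact P f g w (Submodule.injective_subtype Kc) hπ₀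
    (Submodule.range_subtype Kc).symm
  have hrel : (ComplexShape.up ℕ).Rel i (i+1) := by simp
  refine ⟨K, hKfin, hS.δ i (i+1) hrel, ?_⟩
  have hex := hS.homology_exact₃ i (i+1) hrel
  rw [ShortComplex.moduleCat_exact_iff] at hex
  have hker0 : ∀ x, hS.δ i (i+1) hrel x = 0 → x = 0 := by
    intro x hx
    obtain ⟨y, hy⟩ := hex x hx
    haveI := subsingleton_HH_pi P hMCM i hi k
    have hy0 : y = 0 := Subsingleton.elim (α := HH P i F) _ _
    rw [← hy, hy0, map_zero]
  intro (a : ↑((sc3 P f g w).X₃.homology i)) (b : ↑((sc3 P f g w).X₃.homology i)) hab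
  have : hS.δ i (i+1) hrel (a - b) = 0 := by rw [map_sub, sub_eq_zero]; exact hab
  have := hker0 _ this
  rwa [sub_eq_zero] at this

end Stmt17Aux


section
open Stmt17Aux

lemma stmt17_shift [IsNoetherianRing R] {M : ModuleCat.{v} R} (P : ProjectiveResolution M)
    (hMCM : ∀ i : ℕ, 0 < i →
      Subsingleton (((Ext R (ModuleCat.{v} R) i).obj (Opposite.op M)).obj (ModuleCat.of R R)))
    (r : R) (n : ℕ) (hn : 1 ≤ n)
    (hr : ∀ i, n + 1 ≤ i → ∀ N : ModuleCat.{v} R, Module.Finite R N →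
      ∀ x : ((Ext R (ModuleCat.{v} R) i).obj (Opposite.op M)).obj N, r • x = 0) :
    ∀ i, n ≤ i → ∀ N : ModuleCat.{v} R, Module.Finite R N →
      ∀ x : ((Ext R (ModuleCat.{v} R) i).obj (Opposite.op M)).obj N, r • x = 0 := by
  intro i hi N hN x
  have hi1 : 0 < i := lt_of_lt_of_le hn hi
  obtain ⟨K, hK, φ, hφ⟩ := exists_delta P hMCM N hN i hi1
  let e := (P.isoExt (R := R) i N).toLinearEquiv
  let e' := (P.isoExt (R := R) (i+1) K).toLinearEquiv
  have h1 : φ (e (r • x)) = 0 := by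
    rw [map_smul, map_smul]
    have h3 : r • (e'.symm (φ (e x))) = 0 := hr (i+1) (by omega) K hK _
    calc r • φ (e x) = e' (r • e'.symm (φ (e x))) := by
          rw [map_smul, e'.apply_symm_apply]
      _ = 0 := by rw [h3, map_zero]
  have h4 : e (r • x) = 0 := by
    apply hφ
    rw [h1, map_zero]
  have h5 := congrArg e.symm h4
  rw [e.symm_apply_apply, map_zero] at h5
  exact h5

end
end Stmt17AuxSec

/-- over a Gorenstein ring, `ca_R^1(M) = ca_R(M)` for `M` maximal
Cohen–Macaulay. -/
theorem stmt17 (R : Type u) [CommRing R] [IsNoetherianRing R]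
    (hGor : ∀ p : PrimeSpectrum R, ∃ n : ℕ,
      injDimLE (Localization.AtPrime p.asIdeal) n
        (ModuleCat.of (Localization.AtPrime p.asIdeal) (Localization.AtPrime p.asIdeal)))
    (M : ModuleCat.{u} R) [Module.Finite R M]
    (hMCM : ∀ i : ℕ, 0 < i → Subsingleton (ExtM R i M (ModuleCat.of R R))) :
    (caN R 1 M : Set R) = ca R M := by
  apply Set.Subset.antisymm
  · exact Set.subset_iUnion (fun n => (caN R n M : Set R)) 1
  · intro r hr
    rw [ca, Set.mem_iUnion] at hr
    obtain ⟨n, hn⟩ := hr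
    have P : ProjectiveResolution M := (HasProjectiveResolution.out (Z := M)).some
    suffices h : ∀ m, ∀ s : R, s ∈ caN R m M → s ∈ caN R 1 M from h n r hn
    intro m
    induction m with
    | zero =>
      intro s hs i hi N hN x
      exact hs i (Nat.zero_le i) N hN x
    | succ m ih =>
      intro s hs
      rcases Nat.eq_zero_or_pos m with h0 | h1
      · subst h0
        exact hs
      · refine ih s ?_
        intro i hi N hN x
        exact stmt17_shift P hMCM s m h1 (fun j hj N' hN' y => hs j hj N' hN' y) i hi N hN x
end
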